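/- Let X̃ be an n×p real matrix with X̃ᵀX̃ positive definite, b ≥ 2, ρ > 0, and let D̄ = (1/b)·X̃ᵀX̃. Define M_s as the bp×bp linear map whose action on v = (v₁,…,v_b) is given blockwise by (M_s v)ᵢ = (I − (I + D̄/ρ)⁻¹)vᵢ + (2(I + D̄/ρ)⁻¹ − I)·v̄, where v̄ = (1/b)∑ⱼ vⱼ. Then a nonzero real number λ is an eigenvalue of M_s if and only if bρ(1−λ)/λ is an eigenvalue of X̃ᵀX̃ or bρλ/(1−λ) is an eigenvalue of X̃ᵀX̃. -/

import Mathlib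

open Matrix

/-- The averaging projection `P = (1/b)·(J_b ⊗ I_p)` on index type `Fin p × Fin b`. -/
noncomputable def avgProj (p b : ℕ) : Matrix (Fin p × Fin b) (Fin p × Fin b) ℝ :=
  fun x y => if x.1 = y.1 then (b : ℝ)⁻¹ else 0

/-- The ADMM mapping matrix when all `b` local covariance matrices are equal to `D̄`:
blockwise, `(M_s v)ᵢ = (I − Φ̄)vᵢ + (2Φ̄ − I)·v̄` where `Φ̄ = (I + D̄/ρ)⁻¹`. -/
noncomputable def admmMs (p b : ℕ) (ρ : ℝ) (Dbar : Matrix (Fin p) (Fin p) ℝ) :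
    Matrix (Fin p × Fin b) (Fin p × Fin b) ℝ :=
  Matrix.blockDiagonal (fun _ : Fin b => 1 - (1 + ρ⁻¹ • Dbar)⁻¹) +
    Matrix.blockDiagonal (fun _ : Fin b => (2 : ℝ) • (1 + ρ⁻¹ • Dbar)⁻¹ - 1) * avgProj p b

lemma mem_spectrum_iff_exists {m : Type*} [Fintype m] [DecidableEq m]
    (M : Matrix m m ℝ) (t : ℝ) :
    t ∈ spectrum ℝ M ↔ ∃ v, v ≠ 0 ∧ M *ᵥ v = t • v := by
  rw [spectrum.mem_iff, Matrix.isUnit_iff_isUnit_det, isUnit_iff_ne_zero, not_ne_iff,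
    ← Matrix.exists_mulVec_eq_zero_iff]
  have key : ∀ v : m → ℝ, ((algebraMap ℝ (Matrix m m ℝ)) t - M) *ᵥ v = t • v - M *ᵥ v := by
    intro v
    rw [Matrix.sub_mulVec]
    congr 1
    rw [Matrix.algebraMap_eq_diagonal]
    ext i
    simp [Matrix.mulVec_diagonal]
  constructor
  · rintro ⟨v, hv, h⟩
    rw [key, sub_eq_zero] at h
    exact ⟨v, hv, h.symm⟩
  · rintro ⟨v, hv, h⟩
    exact ⟨v, hv, by rw [key, h, sub_self]⟩

lemma blockDiag_mulVec {p b : ℕ} (C : Matrix (Fin p) (Fin p) ℝ)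
    (v : Fin p × Fin b → ℝ) (i : Fin p) (k : Fin b) :
    (Matrix.blockDiagonal (fun _ : Fin b => C) *ᵥ v) (i, k) = (C *ᵥ (fun j => v (j, k))) i := by
  simp only [Matrix.mulVec, dotProduct, Fintype.sum_prod_type, Matrix.blockDiagonal_apply]
  rw [Finset.sum_comm]
  simp [Finset.sum_ite_eq', mul_comm]

lemma avgProj_mulVec {p b : ℕ} (v : Fin p × Fin b → ℝ) (i : Fin p) (k : Fin b) :
    (avgProj p b *ᵥ v) (i, k) = (b : ℝ)⁻¹ * ∑ l, v (i, l) := by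
  simp only [Matrix.mulVec, dotProduct, Fintype.sum_prod_type, avgProj]
  simp [Finset.mul_sum, Finset.sum_ite_eq']

theorem eigenvalues_of_Ms {n p b : ℕ} (hb : 2 ≤ b)
    (X : Matrix (Fin n) (Fin p) ℝ) (hX : (Xᵀ * X).PosDef)
    (ρ : ℝ) (hρ : 0 < ρ) :
    ∀ lam : ℝ, lam ≠ 0 →
      (lam ∈ spectrum ℝ (admmMs p b ρ (((b : ℝ))⁻¹ • (Xᵀ * X))) ↔
        (b * ρ * (1 - lam) / lam ∈ spectrum ℝ (Xᵀ * X) ∨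
         b * ρ * lam / (1 - lam) ∈ spectrum ℝ (Xᵀ * X))) := by
  intro lam hlam
  set A : Matrix (Fin p) (Fin p) ℝ := Xᵀ * X with hAdef
  have hbpos : (0 : ℝ) < (b : ℝ) := by exact_mod_cast (by omega : 0 < b)
  have hb0 : (b : ℝ) ≠ 0 := ne_of_gt hbpos
  have hρ0 : ρ ≠ 0 := ne_of_gt hρ
  set c : ℝ := ((b : ℝ) * ρ)⁻¹ with hcdef
  have hc : 0 < c := by positivity
  have hc0 : c ≠ 0 := ne_of_gt hc
  set S : Matrix (Fin p) (Fin p) ℝ := 1 + c • A with hSdef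
  have hDS : (1 : Matrix (Fin p) (Fin p) ℝ) + ρ⁻¹ • ((b : ℝ)⁻¹ • A) = S := by
    rw [hSdef, smul_smul, hcdef, _root_.mul_inv_rev]
  -- S is positive definite
  have hcA : (c • A).PosDef := by
    refine Matrix.PosDef.of_dotProduct_mulVec_pos ?_ (fun x hx => ?_)
    · show (c • A)ᴴ = c • A
      rw [Matrix.conjTranspose_smul, star_trivial, hX.1]
    · rw [Matrix.smul_mulVec, dotProduct_smul, smul_eq_mul]
      exact mul_pos hc (hX.dotProduct_mulVec_pos hx)
  have hSpos : S.PosDef := Matrix.PosDef.posSemidef_add Matrix.PosSemidef.one hcA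
  have hSdet : IsUnit S.det := hSpos.det_pos.ne'.isUnit
  set Φ : Matrix (Fin p) (Fin p) ℝ := S⁻¹ with hΦdef
  have hΦS : Φ * S = 1 := Matrix.nonsing_inv_mul S hSdet
  have hSΦ : S * Φ = 1 := Matrix.mul_nonsing_inv S hSdet
  -- eigen transfer lemmas
  have E1 : ∀ (w : Fin p → ℝ) (t : ℝ), t ≠ 0 → S *ᵥ w = t • w → Φ *ᵥ w = t⁻¹ • w := by
    intro w t ht h
    have h1 : Φ *ᵥ (S *ᵥ w) = w := by rw [Matrix.mulVec_mulVec, hΦS, Matrix.one_mulVec]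
    rw [h, Matrix.mulVec_smul] at h1
    exact (eq_inv_smul_iff₀ ht).2 h1
  have E2 : ∀ (w : Fin p → ℝ) (t : ℝ), w ≠ 0 → Φ *ᵥ w = t • w →
      t ≠ 0 ∧ S *ᵥ w = t⁻¹ • w := by
    intro w t hw h
    have h1 : S *ᵥ (Φ *ᵥ w) = w := by rw [Matrix.mulVec_mulVec, hSΦ, Matrix.one_mulVec]
    rw [h, Matrix.mulVec_smul] at h1
    have ht : t ≠ 0 := by
      rintro rfl
      rw [zero_smul] at h1
      exact hw h1.symm
    exact ⟨ht, (eq_inv_smul_iff₀ ht).2 h1⟩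
  have hSv : ∀ u : Fin p → ℝ, S *ᵥ u = u + c • (A *ᵥ u) := by
    intro u
    rw [hSdef, Matrix.add_mulVec, Matrix.one_mulVec, Matrix.smul_mulVec]
  have hAS : ∀ (u : Fin p → ℝ) (s : ℝ), S *ᵥ u = s • u → A *ᵥ u = (c⁻¹ * (s - 1)) • u := by
    intro u s h
    have h2 := hSv u
    rw [h] at h2
    have h3 : c • (A *ᵥ u) = (s - 1) • u := by
      rw [sub_smul, one_smul, h2]
      abel
    have h4 : A *ᵥ u = c⁻¹ • ((s - 1) • u) := (eq_inv_smul_iff₀ hc0).2 h3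
    rw [h4, smul_smul]
  -- blockwise action of Ms
  have hMs : ∀ (v : Fin p × Fin b → ℝ) (i : Fin p) (k : Fin b),
      ((admmMs p b ρ ((b : ℝ)⁻¹ • A)) *ᵥ v) (i, k) =
        ((1 - Φ) *ᵥ (fun j => v (j, k))) i +
          (((2 : ℝ) • Φ - 1) *ᵥ (fun j => (b : ℝ)⁻¹ * ∑ l, v (j, l))) i := by
    intro v i k
    rw [admmMs, hDS, ← hΦdef, Matrix.add_mulVec, ← Matrix.mulVec_mulVec]
    rw [Pi.add_apply, blockDiag_mulVec, blockDiag_mulVec]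
    congr 2
    funext j
    exact avgProj_mulVec v j k
  have hsum : (1 - Φ) + ((2 : ℝ) • Φ - 1) = Φ := by
    rw [two_smul]; abel
  rw [mem_spectrum_iff_exists]
  constructor
  · rintro ⟨v, hv, hMv⟩
    set w : Fin p → ℝ := fun j => (b : ℝ)⁻¹ * ∑ l, v (j, l) with hwdef
    have hrowsum : ∀ (C : Matrix (Fin p) (Fin p) ℝ) (i : Fin p),
        (b : ℝ)⁻¹ * ∑ k, (C *ᵥ (fun j => v (j, k))) i = (C *ᵥ w) i := by
      intro C i
      simp only [Matrix.mulVec, dotProduct, hwdef, Finset.mul_sum]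
      rw [Finset.sum_comm]
      refine Finset.sum_congr rfl fun j _ => ?_
      simp only [← Finset.mul_sum]
      ring
    have hΦw : Φ *ᵥ w = lam • w := by
      have hkey : ∀ i, ((1 - Φ) *ᵥ w) i + (((2 : ℝ) • Φ - 1) *ᵥ w) i = lam * w i := by
        intro i
        set T : ℝ := (((2 : ℝ) • Φ - 1) *ᵥ w) i with hT
        have h1 : ∀ k : Fin b, ((1 - Φ) *ᵥ (fun j => v (j, k))) i =
            lam * v (i, k) - T := by
          intro k
          have := hMs v i k
          rw [hMv] at this
          simp only [Pi.smul_apply, smul_eq_mul, ← hT] at this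
          linarith [this]
        have h2 : (b : ℝ)⁻¹ * ∑ k, ((1 - Φ) *ᵥ (fun j => v (j, k))) i = ((1 - Φ) *ᵥ w) i :=
          hrowsum _ i
        have h3 : ∑ k : Fin b, ((1 - Φ) *ᵥ (fun j => v (j, k))) i =
            lam * ((b : ℝ) * w i) - (b : ℝ) * T := by
          rw [Finset.sum_congr rfl (fun k _ => h1 k), Finset.sum_sub_distrib,
            ← Finset.mul_sum, Finset.sum_const, Finset.card_univ, Fintype.card_fin,
            nsmul_eq_mul]
          have hbwi : (b : ℝ) * w i = ∑ k, v (i, k) := by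
            rw [hwdef]
            field_simp
          rw [hbwi]
        rw [h3] at h2
        rw [← h2]
        field_simp
        ring
      ext i
      rw [← hsum, Matrix.add_mulVec, Pi.add_apply, Pi.smul_apply, smul_eq_mul]
      exact hkey i
    by_cases hw : w = 0
    · -- average is zero: right disjunct
      right
      have hvne : ∃ q : Fin p × Fin b, v q ≠ 0 := by
        by_contra h
        push_neg at h
        exact hv (funext fun q => h q)
      obtain ⟨⟨i0, k0⟩, hq⟩ := hvne
      set u : Fin p → ℝ := fun j => v (j, k0) with hudef
      have hu : u ≠ 0 := by
        intro h
        exact hq (congrFun h i0)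
      have hrow : (1 - Φ) *ᵥ u = lam • u := by
        ext i
        have := hMs v i k0
        rw [hMv] at this
        rw [← hwdef, hw, Matrix.mulVec_zero] at this
        simp only [Pi.zero_apply, add_zero, Pi.smul_apply, smul_eq_mul] at this
        rw [← hudef] at this
        rw [Pi.smul_apply, smul_eq_mul]
        exact this.symm
      have hΦu : Φ *ᵥ u = (1 - lam) • u := by
        rw [Matrix.sub_mulVec, Matrix.one_mulVec] at hrow
        have : Φ *ᵥ u = u - lam • u := by
          rw [← hrow]; abel
        rw [this, sub_smul, one_smul]
      obtain ⟨ht, hSu⟩ := E2 u (1 - lam) hu hΦu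
      have hAu := hAS u (1 - lam)⁻¹ hSu
      have harith : c⁻¹ * ((1 - lam)⁻¹ - 1) = (b : ℝ) * ρ * lam / (1 - lam) := by
        rw [hcdef, inv_inv]
        field_simp
        ring
      rw [harith] at hAu
      exact (mem_spectrum_iff_exists A _).2 ⟨u, hu, hAu⟩
    · -- average nonzero: left disjunct
      left
      obtain ⟨ht, hSw⟩ := E2 w lam hw hΦw
      have hAw := hAS w lam⁻¹ hSw
      have harith : c⁻¹ * (lam⁻¹ - 1) = (b : ℝ) * ρ * (1 - lam) / lam := by
        rw [hcdef, inv_inv]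
        field_simp
      rw [harith] at hAw
      exact (mem_spectrum_iff_exists A _).2 ⟨w, hw, hAw⟩
  · rintro (hμ | hμ)
    · -- constant-block eigenvector
      obtain ⟨u, hu, hAu⟩ := (mem_spectrum_iff_exists A _).1 hμ
      have hSu : S *ᵥ u = lam⁻¹ • u := by
        rw [hSv u, hAu, smul_smul]
        have : 1 + c * ((b : ℝ) * ρ * (1 - lam) / lam) = lam⁻¹ := by
          rw [hcdef]
          field_simp
          ring
        rw [← this]
        ext j
        simp
        ring
      have hΦu : Φ *ᵥ u = lam • u := by
        have := E1 u lam⁻¹ (inv_ne_zero hlam) hSu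
        rw [inv_inv] at this
        exact this
      refine ⟨fun q => u q.1, ?_, ?_⟩
      · intro h
        apply hu
        funext j
        have := congrFun h (j, ⟨0, by omega⟩)
        exact this
      · ext ⟨i, k⟩
        rw [hMs]
        have hwu : (fun j => (b : ℝ)⁻¹ * ∑ _l : Fin b, u j) = u := by
          funext j
          rw [Finset.sum_const, Finset.card_univ, Fintype.card_fin, nsmul_eq_mul]
          field_simp
        simp only []
        rw [hwu]
        have : ((1 - Φ) *ᵥ u) i + (((2 : ℝ) • Φ - 1) *ᵥ u) i = (Φ *ᵥ u) i := by
          rw [← Pi.add_apply, ← Matrix.add_mulVec, hsum]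
        rw [this, hΦu]
        simp
    · -- difference eigenvector
      have hlam1 : lam ≠ 1 := by
        rintro rfl
        rw [sub_self, div_zero] at hμ
        obtain ⟨u, hu, hAu⟩ := (mem_spectrum_iff_exists A _).1 hμ
        rw [zero_smul] at hAu
        have := hX.dotProduct_mulVec_pos hu
        rw [hAu, dotProduct_zero] at this
        exact lt_irrefl 0 this
      have h1lam : (1 : ℝ) - lam ≠ 0 := sub_ne_zero.mpr (Ne.symm hlam1)
      obtain ⟨u, hu, hAu⟩ := (mem_spectrum_iff_exists A _).1 hμ
      have hSu : S *ᵥ u = (1 - lam)⁻¹ • u := by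
        rw [hSv u, hAu, smul_smul]
        have : 1 + c * ((b : ℝ) * ρ * lam / (1 - lam)) = (1 - lam)⁻¹ := by
          rw [hcdef]
          field_simp
          ring
        rw [← this]
        ext j
        simp
        ring
      have hΦu : Φ *ᵥ u = (1 - lam) • u := by
        have := E1 u (1 - lam)⁻¹ (inv_ne_zero h1lam) hSu
        rw [inv_inv] at this
        exact this
      have h1Φu : (1 - Φ) *ᵥ u = lam • u := by
        rw [Matrix.sub_mulVec, Matrix.one_mulVec, hΦu]
        ext j
        simp
        ring
      set k0 : Fin b := ⟨0, by omega⟩ with hk0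
      set k1 : Fin b := ⟨1, by omega⟩ with hk1
      have hk01 : k0 ≠ k1 := by
        intro h
        have := congrArg Fin.val h
        simp [hk0, hk1] at this
      set v : Fin p × Fin b → ℝ :=
        fun q => if q.2 = k0 then u q.1 else if q.2 = k1 then -u q.1 else 0 with hvdef
      have hvrow0 : ∀ j, (if (k0 : Fin b) = k0 then u j else if k0 = k1 then -u j else 0) = u j := by
        intro j; simp
      have hvsum : ∀ j, ∑ l : Fin b, v (j, l) = 0 := by
        intro j
        have hsplit : ∀ l : Fin b, v (j, l) =
            (if l = k0 then u j else 0) + (if l = k1 then -u j else 0) := by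
          intro l
          rw [hvdef]
          by_cases h0 : l = k0
          · subst h0
            simp [hk01]
          · by_cases h1 : l = k1 <;> simp [h0, h1, Ne.symm hk01]
        rw [Finset.sum_congr rfl (fun l _ => hsplit l), Finset.sum_add_distrib]
        rw [Finset.sum_ite_eq' Finset.univ k0, Finset.sum_ite_eq' Finset.univ k1]
        simp
      have hwv : (fun j => (b : ℝ)⁻¹ * ∑ l, v (j, l)) = (0 : Fin p → ℝ) := by
        funext j
        rw [hvsum j, mul_zero]
        rfl
      have hvne : v ≠ 0 := by
        intro h
        apply hu
        funext j
        have := congrFun h (j, k0)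
        simpa [hvdef] using this
      refine ⟨v, hvne, ?_⟩
      ext ⟨i, k⟩
      rw [hMs, hwv, Matrix.mulVec_zero]
      simp only [Pi.zero_apply, add_zero, Pi.smul_apply, smul_eq_mul]
      by_cases h0 : k = k0
      · subst h0
        have hrow : (fun j => v (j, k0)) = u := by
          funext j; simp [hvdef]
        rw [hrow, h1Φu]
        simp [hvdef]
      · by_cases h1 : k = k1
        · subst h1
          have hrow : (fun j => v (j, k1)) = -u := by
            funext j; simp [hvdef, hk01.symm, h0]
          rw [hrow, Matrix.mulVec_neg, h1Φu]
          simp [hvdef, h0]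
        · have hrow : (fun j => v (j, k)) = 0 := by
            funext j; simp [hvdef, h0, h1]
          rw [hrow, Matrix.mulVec_zero]
          simp [hvdef, h0, h1]
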